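/- Let K = F_{p^m}, F = F_{p^a} with a | m, and suppose χ : K → F is F-linear and nonzero, f : K → K is F-linear and nonzero with f² = 0, χ∘f = 0, and ker(χ) = ker(f). If p is odd, then the group I_{χ,f} = {(x, 1-χ(x)f) : x ∈ K} is elementary abelian of order p^m (every nonidentity element has order p and the group is abelian). -/

import Mathlib

/-- Suppose `χ : K → F` is `F`-linear and nonzero, `f : K → K` is
`F`-linear and nonzero with `f² = 0` and `χ ∘ f = 0`, and `ker χ = ker f`. If `p` is odd,
then the group `I_{χ,f} = {(x, 1-χ(x)f) : x ∈ K}` (whose element determined by `x` is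
the permutation `z ↦ x + z - χ(x)·f(z)` of `K`) is elementary abelian of order `p^m`:
it is abelian, every nonidentity element has order exactly `p`, and it has `p^m`
elements. -/
theorem stmt17 (p m a : ℕ) (hp : p.Prime) (hodd : Odd p) (ham : a ∣ m)
    (F K : Type*) [Field F] [Field K] [Algebra F K] [Fintype F] [Fintype K]
    (hF : Fintype.card F = p ^ a) (hK : Fintype.card K = p ^ m)
    (f : K →ₗ[F] K) (hf : f ≠ 0) (hf2 : f ∘ₗ f = 0)
    (χ : K →ₗ[F] F) (hχ : χ ≠ 0) (hχf : ∀ x : K, χ (f x) = 0)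
    (hker : ∀ x : K, χ x = 0 ↔ f x = 0) :
    (∀ x y : K,
      (fun z : K => x + (z - χ x • f z)) ∘ (fun z : K => y + (z - χ y • f z)) =
        (fun z : K => y + (z - χ y • f z)) ∘ (fun z : K => x + (z - χ x • f z))) ∧
    (∀ x : K, x ≠ 0 →
      (fun z : K => x + (z - χ x • f z))^[p] = id ∧
      ∀ k : ℕ, 0 < k → k < p → (fun z : K => x + (z - χ x • f z))^[k] ≠ id) ∧
    Nat.card {g : K → K | ∃ x : K, g = fun z : K => x + (z - χ x • f z)} = p ^ m := by
  classical
  -- characteristic of F and K is p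
  have hcharF : CharP F p := by
    obtain ⟨q, hq⟩ := CharP.exists F
    haveI := hq
    obtain ⟨n, hqp, hcard⟩ := FiniteField.card F q
    have hqdvd : q ∣ p ^ a := by
      rw [← hF, hcard]; exact dvd_pow_self q n.pos.ne'
    have : q = p := (Nat.prime_dvd_prime_iff_eq hqp hp).mp (hqp.dvd_of_dvd_pow hqdvd)
    rwa [this] at hq
  have hcharK : CharP K p := charP_of_injective_algebraMap' (A := K) F p
  -- structure of f : f x = χ x • c
  obtain ⟨w, hw⟩ : ∃ w, χ w ≠ 0 := by
    by_contra h
    push_neg at h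
    exact hχ (LinearMap.ext fun x => h x)
  set x₀ : K := (χ w)⁻¹ • w with hx₀def
  have hx₀ : χ x₀ = 1 := by
    rw [hx₀def, map_smul, smul_eq_mul, inv_mul_cancel₀ hw]
  set c : K := f x₀ with hcdef
  have hfc : ∀ x, f x = χ x • c := by
    intro x
    have h1 : χ (x - χ x • x₀) = 0 := by
      rw [map_sub, map_smul, hx₀, smul_eq_mul, mul_one, sub_self]
    have h2 : f (x - χ x • x₀) = 0 := (hker _).mp h1
    rw [map_sub, map_smul, sub_eq_zero] at h2
    exact h2
  have hc0 : c ≠ 0 := by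
    intro h
    apply hf
    ext x
    simp [hfc, h]
  have hχc : χ c = 0 := hχf x₀
  -- key rewriting of the permutation
  have hT : ∀ x z : K, x + (z - χ x • f z) = x + z - (χ x * χ z) • c := by
    intro x z
    rw [hfc, smul_smul, add_sub_assoc]
  -- part 1: abelian
  have part1 : ∀ x y : K,
      (fun z : K => x + (z - χ x • f z)) ∘ (fun z : K => y + (z - χ y • f z)) =
        (fun z : K => y + (z - χ y • f z)) ∘ (fun z : K => x + (z - χ x • f z)) := by
    intro x y
    funext z
    simp only [Function.comp_apply, hT]
    have hχ1 : χ (y + z - (χ y * χ z) • c) = χ y + χ z := by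
      rw [map_sub, map_add, map_smul, smul_eq_mul, hχc, mul_zero, sub_zero]
    have hχ2 : χ (x + z - (χ x * χ z) • c) = χ x + χ z := by
      rw [map_sub, map_add, map_smul, smul_eq_mul, hχc, mul_zero, sub_zero]
    rw [hχ1, hχ2]
    module
  -- the iterate formula
  have hiter : ∀ (x : K) (k : ℕ) (z : K),
      (fun z : K => x + (z - χ x • f z))^[k] z =
        k • x + z - (((k : F) * (χ x * χ z) + ((k.choose 2 : ℕ) : F) * (χ x * χ x)) • c) := by
    intro x k
    induction k with
    | zero => intro z; simp
    | succ k ih =>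
      intro z
      rw [Function.iterate_succ_apply', ih]
      have hχ3 : χ (k • x + z -
          (((k : F) * (χ x * χ z) + ((k.choose 2 : ℕ) : F) * (χ x * χ x)) • c))
          = (k : F) * χ x + χ z := by
        rw [map_sub, map_add, map_nsmul, map_smul, smul_eq_mul, hχc, mul_zero,
          sub_zero, nsmul_eq_mul]
      rw [hT, hχ3, succ_nsmul, Nat.choose_succ_succ, Nat.choose_one_right]
      push_cast
      have hkx : k • x = (k : F) • x := (Nat.cast_smul_eq_nsmul F k x).symm
      rw [hkx]
      module
  -- injectivity of x ↦ T_x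
  have hinj : Function.Injective (fun x : K => (fun z : K => x + (z - χ x • f z))) := by
    intro x y h
    have h0 := congrFun h 0
    simpa using h0
  refine ⟨part1, ?_, ?_⟩
  · intro x hx
    have hp2 : 2 < p := by
      have := hp.two_le
      have hpne2 : p ≠ 2 := by rintro rfl; exact (by decide : ¬ Odd 2) hodd
      omega
    constructor
    · funext z
      rw [hiter, id_eq]
      have h1 : (p : F) = 0 := CharP.cast_eq_zero F p
      have h2 : ((p.choose 2 : ℕ) : F) = 0 := by
        rw [CharP.cast_eq_zero_iff F p]
        exact hp.dvd_choose_self two_ne_zero hp2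
      have h3 : p • x = 0 := by
        rw [← Nat.cast_smul_eq_nsmul F p x, h1, zero_smul]
      rw [h1, h2, h3]
      simp
    · intro k hk0 hkp hid
      have hkF : (k : F) ≠ 0 := by
        rw [Ne, CharP.cast_eq_zero_iff F p k]
        intro hd
        have := Nat.le_of_dvd hk0 hd
        omega
      have heq : ∀ z : K, k • x - (((k : F) * (χ x * χ z)
          + ((k.choose 2 : ℕ) : F) * (χ x * χ x)) • c) = 0 := by
        intro z
        have h := congrFun hid z
        rw [hiter, id_eq] at h
        calc k • x - (((k : F) * (χ x * χ z)
              + ((k.choose 2 : ℕ) : F) * (χ x * χ x)) • c)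
            = (k • x + z - (((k : F) * (χ x * χ z)
              + ((k.choose 2 : ℕ) : F) * (χ x * χ x)) • c)) - z := by abel
          _ = 0 := by rw [h, sub_self]
      by_cases hχx : χ x = 0
      · have h0 := heq 0
        rw [hχx] at h0
        simp only [map_zero, mul_zero, zero_mul, add_zero, zero_add, zero_smul,
          sub_zero] at h0
        have hkK : (k : K) ≠ 0 := by
          rw [Ne, CharP.cast_eq_zero_iff K p k]
          intro hd
          have := Nat.le_of_dvd hk0 hd
          omega
        apply hx
        have : (k : K) * x = 0 := by rwa [← nsmul_eq_mul]
        rcases mul_eq_zero.mp this with h | h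
        · exact absurd h hkK
        · exact h
      · have e1 := heq w
        have e2 := heq 0
        simp only [map_zero, mul_zero, zero_add] at e2
        rw [add_smul] at e1
        have h5 : ((k : F) * (χ x * χ w)) • c
            = (k • x - (((k.choose 2 : ℕ) : F) * (χ x * χ x)) • c)
              - (k • x - (((k : F) * (χ x * χ w)) • c
                + (((k.choose 2 : ℕ) : F) * (χ x * χ x)) • c)) := by abel
        rw [e1, e2, sub_zero] at h5
        have h6 : (k : F) * (χ x * χ w) ≠ 0 := mul_ne_zero hkF (mul_ne_zero hχx hw)
        exact hc0 (by simpa [h6] using h5)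
  · have hset : {g : K → K | ∃ x : K, g = fun z : K => x + (z - χ x • f z)}
        = Set.range (fun x : K => (fun z : K => x + (z - χ x • f z))) := by
      ext g
      constructor
      · rintro ⟨x, rfl⟩; exact ⟨x, rfl⟩
      · rintro ⟨x, rfl⟩; exact ⟨x, rfl⟩
    rw [hset, Nat.card_range_of_injective hinj, Nat.card_eq_fintype_card, hK]
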